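/- Let f : ℝ² → ℝ be C², and let X = (X¹,X²), Y = (Y¹,Y²) be fixed unit vectors. Define u := f_X(1 + f_Y²) and v := f_Y(1 + f_X²), where f_X := ⟨∇f, X⟩, f_Y := ⟨∇f, Y⟩. Then f_{XX}(1 + f_Y²) − f_{YY}(1 + f_X²) equals the divergence of the vector field (uX¹ − vY¹, uX² − vY²). -/

import Mathlib

set_option maxHeartbeats 2000000 in
/-- For a `C²` function `f : ℝ² → ℝ` and unit vectors `X`, `Y`,
setting `u := f_X (1 + f_Y²)` and `v := f_Y (1 + f_X²)`, the expression
`f_{XX}(1 + f_Y²) − f_{YY}(1 + f_X²)` equals the divergence of the vector field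
`(uX¹ − vY¹, uX² − vY²)`. -/
theorem curvature_difference_eq_divergence
    (f : ℝ × ℝ → ℝ) (hf : ContDiff ℝ 2 f) (X Y : ℝ × ℝ)
    (hX : X.1 ^ 2 + X.2 ^ 2 = 1) (hY : Y.1 ^ 2 + Y.2 ^ 2 = 1) (p : ℝ × ℝ) :
    fderiv ℝ (fun q => fderiv ℝ f q X) p X * (1 + (fderiv ℝ f p Y) ^ 2)
      - fderiv ℝ (fun q => fderiv ℝ f q Y) p Y * (1 + (fderiv ℝ f p X) ^ 2)
    = fderiv ℝ (fun q =>
          (fderiv ℝ f q X * (1 + (fderiv ℝ f q Y) ^ 2)) * X.1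
            - (fderiv ℝ f q Y * (1 + (fderiv ℝ f q X) ^ 2)) * Y.1) p (1, 0)
      + fderiv ℝ (fun q =>
          (fderiv ℝ f q X * (1 + (fderiv ℝ f q Y) ^ 2)) * X.2
            - (fderiv ℝ f q Y * (1 + (fderiv ℝ f q X) ^ 2)) * Y.2) p (0, 1) := by
  have hF : ContDiff ℝ 1 (fderiv ℝ f) := hf.fderiv_right (by norm_num)
  have hFd : HasFDerivAt (fderiv ℝ f) (fderiv ℝ (fderiv ℝ f) p) p :=
    (hF.differentiable one_ne_zero p).hasFDerivAt
  set F' := fderiv ℝ (fderiv ℝ f) p with hF'def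
  have key : ∀ V : ℝ × ℝ, HasFDerivAt (fun q => fderiv ℝ f q V)
      ((ContinuousLinearMap.apply ℝ ℝ V).comp F') p :=
    fun V => ((ContinuousLinearMap.apply ℝ ℝ V).hasFDerivAt).comp p hFd
  have hsym : ∀ v w : ℝ × ℝ, F' v w = F' w v :=
    (hf.contDiffAt.isSymmSndFDerivAt (by simp)).eq
  simp only [sq]
  have hu : HasFDerivAt
      (fun q => fderiv ℝ f q X * (1 + fderiv ℝ f q Y * fderiv ℝ f q Y)) _ p :=
    (key X).mul (((key Y).mul (key Y)).const_add 1)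
  have hv : HasFDerivAt
      (fun q => fderiv ℝ f q Y * (1 + fderiv ℝ f q X * fderiv ℝ f q X)) _ p :=
    (key Y).mul (((key X).mul (key X)).const_add 1)
  have h1 := ((hu.mul_const X.1).sub (hv.mul_const Y.1)).fderiv
  have h2 := ((hu.mul_const X.2).sub (hv.mul_const Y.2)).fderiv
  simp only [Pi.sub_def] at h1 h2
  rw [h1, h2, (key X).fderiv, (key Y).fderiv]
  have hXe : X = X.1 • ((1:ℝ), (0:ℝ)) + X.2 • ((0:ℝ), (1:ℝ)) := by
    ext <;> simp
  have hYe : Y = Y.1 • ((1:ℝ), (0:ℝ)) + Y.2 • ((0:ℝ), (1:ℝ)) := by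
    ext <;> simp
  rw [show fderiv ℝ f p X = fderiv ℝ f p (X.1 • ((1:ℝ), (0:ℝ)) + X.2 • (0, 1)) by rw [← hXe],
      show fderiv ℝ f p Y = fderiv ℝ f p (Y.1 • ((1:ℝ), (0:ℝ)) + Y.2 • (0, 1)) by rw [← hYe]]
  conv_lhs => rw [hXe, hYe]
  simp only [ContinuousLinearMap.add_apply, ContinuousLinearMap.smul_apply,
    ContinuousLinearMap.comp_apply, ContinuousLinearMap.coe_smul', Pi.smul_apply,
    ContinuousLinearMap.apply_apply, map_add, map_smul, smul_eq_mul,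
    ContinuousLinearMap.sub_apply, ContinuousLinearMap.coe_sub', Pi.sub_apply]
  rw [hXe, hYe]
  simp only [map_add, map_smul, ContinuousLinearMap.add_apply,
    ContinuousLinearMap.smul_apply, smul_eq_mul]
  simp only [Prod.fst_add, Prod.snd_add, Prod.smul_mk, smul_eq_mul, mul_one, mul_zero,
    add_zero, zero_add]
  rw [hsym ((0:ℝ),(1:ℝ)) ((1:ℝ),(0:ℝ))]
  ring
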